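/- Let 0 < c ≤ 1. The inf-sup condition — for every nonzero v ∈ U, the supremum over w ∈ Z with T*w ≠ 0 of |⟨v, T*w⟩| / ‖T*w‖ is at least c‖v‖ — holds if and only if the sup-inf condition holds: ‖v − P v‖ ≤ √(1 − c²) · ‖v‖ for all v ∈ U. -/

import Mathlib

open scoped RealInnerProductSpace

/-- For `0 < c ≤ 1`, the inf-sup condition with constant `c` holds on
`U` if and only if the sup-inf condition `‖v − P v‖ ≤ √(1 − c²)‖v‖` holds on `U`. -/
theorem infsup_iff_supinf
    {H : Type*} [NormedAddCommGroup H] [InnerProductSpace ℝ H] [CompleteSpace H]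
    (T : H →ₗ.[ℝ] H) (hdense : Dense (T.domain : Set H)) (hclosed : T.IsClosed)
    (Z : Submodule ℝ T.adjoint.domain) [FiniteDimensional ℝ Z]
    (W : Submodule ℝ H) (hW : W = Z.map T.adjoint.toFun)
    (P : H →ₗ[ℝ] H) (hPmem : ∀ q : H, P q ∈ W)
    (hPorth : ∀ q : H, ∀ w ∈ W, ⟪q - P q, w⟫ = 0)
    (U : Submodule ℝ H) [FiniteDimensional ℝ U]
    (c : ℝ) (hc0 : 0 < c) (hc1 : c ≤ 1) :
    (∀ v ∈ U, v ≠ 0 →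
      c * ‖v‖ ≤ sSup {r : ℝ | ∃ w : T.adjoint.domain, w ∈ Z ∧ T.adjoint w ≠ 0 ∧
        r = |⟪v, T.adjoint w⟫| / ‖T.adjoint w‖}) ↔
    (∀ v ∈ U, ‖v - P v‖ ≤ Real.sqrt (1 - c ^ 2) * ‖v‖) := by
  have hc2 : (0:ℝ) ≤ 1 - c ^ 2 := by nlinarith
  -- inner products with elements of W see only P v
  have hinner : ∀ v : H, ∀ u ∈ W, ⟪v, u⟫ = ⟪P v, u⟫ := by
    intro v u hu
    have h := hPorth v u hu
    rw [inner_sub_left] at h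
    linarith
  -- the supremum equals ‖P v‖
  have hsup : ∀ v : H,
      sSup {r : ℝ | ∃ w : T.adjoint.domain, w ∈ Z ∧ T.adjoint w ≠ 0 ∧
        r = |⟪v, T.adjoint w⟫| / ‖T.adjoint w‖} = ‖P v‖ := by
    intro v
    set S := {r : ℝ | ∃ w : T.adjoint.domain, w ∈ Z ∧ T.adjoint w ≠ 0 ∧
        r = |⟪v, T.adjoint w⟫| / ‖T.adjoint w‖} with hS
    by_cases hne : S.Nonempty
    · have hub : ∀ r ∈ S, r ≤ ‖P v‖ := by
        rintro r ⟨w, hwZ, hw0, rfl⟩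
        have hmem : (T.adjoint w : H) ∈ W := by
          rw [hW]; exact ⟨w, hwZ, rfl⟩
        rw [hinner v _ hmem]
        have hn : 0 < ‖T.adjoint w‖ := norm_pos_iff.mpr hw0
        rw [div_le_iff₀ hn]
        exact abs_real_inner_le_norm _ _
      by_cases hP : P v = 0
      · have h0 : ∀ r ∈ S, r ≤ 0 := by simpa [hP] using hub
        have hge : 0 ≤ sSup S := by
          obtain ⟨r, hr⟩ := hne
          obtain ⟨w, hwZ, hw0, hrv⟩ := hr
          have hrn : 0 ≤ r := by
            rw [hrv]; positivity
          exact hrn.trans (le_csSup ⟨‖P v‖, hub⟩ ⟨w, hwZ, hw0, hrv⟩)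
        have hle : sSup S ≤ 0 := csSup_le hne h0
        rw [hP, norm_zero]
        linarith
      · have hPW : P v ∈ W := hPmem v
        have hPW' := hPW
        rw [hW] at hPW'
        obtain ⟨w, hwZ, hw⟩ := hPW'
        have hw' : (T.adjoint w : H) = P v := hw
        have hmemS : ‖P v‖ ∈ S := by
          refine ⟨w, hwZ, by rw [hw']; exact hP, ?_⟩
          rw [hw', hinner v _ hPW, real_inner_self_eq_norm_sq, abs_of_nonneg (by positivity)]
          have hn : 0 < ‖P v‖ := norm_pos_iff.mpr hP
          field_simp
        exact le_antisymm (csSup_le hne hub) (le_csSup ⟨‖P v‖, hub⟩ hmemS)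
    · rw [Set.not_nonempty_iff_eq_empty] at hne
      have hW0 : ∀ u ∈ W, u = 0 := by
        intro u hu
        rw [hW] at hu
        obtain ⟨w, hwZ, rfl⟩ := hu
        by_contra h0
        have : (|⟪v, T.adjoint w⟫| / ‖T.adjoint w‖) ∈ S := ⟨w, hwZ, h0, rfl⟩
        rw [hne] at this
        exact this
      have hP : P v = 0 := hW0 _ (hPmem v)
      rw [hne, Real.sSup_empty, hP, norm_zero]
  -- Pythagoras
  have hpyth : ∀ v : H, ‖v - P v‖ ^ 2 + ‖P v‖ ^ 2 = ‖v‖ ^ 2 := by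
    intro v
    have h0 : ⟪v - P v, P v⟫ = 0 := hPorth v (P v) (hPmem v)
    have h1 := norm_add_sq_real (v - P v) (P v)
    rw [sub_add_cancel, h0] at h1
    linarith
  constructor
  · intro h v hv
    by_cases hv0 : v = 0
    · simp [hv0]
    · have h1 := h v hv hv0
      rw [hsup v] at h1
      have hb2 : ‖v - P v‖ ^ 2 ≤ (1 - c ^ 2) * ‖v‖ ^ 2 := by
        nlinarith [hpyth v, norm_nonneg v, mul_nonneg hc0.le (norm_nonneg v)]
      have := Real.sqrt_le_sqrt hb2
      rwa [Real.sqrt_sq (norm_nonneg _), Real.sqrt_mul hc2,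
        Real.sqrt_sq (norm_nonneg _)] at this
  · intro h v hv hv0
    rw [hsup v]
    have h2 := h v hv
    have hb2 : ‖v - P v‖ ^ 2 ≤ (1 - c ^ 2) * ‖v‖ ^ 2 := by
      have h3 : ‖v - P v‖ ^ 2 ≤ (Real.sqrt (1 - c ^ 2) * ‖v‖) ^ 2 :=
        pow_le_pow_left₀ (norm_nonneg _) h2 2
      rwa [mul_pow, Real.sq_sqrt hc2] at h3
    nlinarith [hpyth v, norm_nonneg (P v), mul_nonneg hc0.le (norm_nonneg v)]
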